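/- If h : ℝ → ℝ is strongly quasisymmetric (i.e., there exist constants C₁, C₂ > 0 such that |h(E)|/|h(I)| ≤ C₁(|E|/|I|)^{C₂} for every interval I ⊂ ℝ and every measurable subset E ⊂ I), then h is locally absolutely continuous. -/

import Mathlib

open MeasureTheory Set

/-- `h` is strongly quasisymmetric with constants `C₁, C₂`:
for every bounded interval `I = [a,b]` and measurable `E ⊆ I`,
`|h(E)|/|h(I)| ≤ C₁ (|E|/|I|)^{C₂}`. -/
def SQSWith (C₁ C₂ : ℝ) (h : ℝ → ℝ) : Prop :=
  ∀ a b : ℝ, a < b → ∀ E ⊆ Set.Icc a b, MeasurableSet E →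
    (volume (h '' E)).toReal / (volume (h '' Set.Icc a b)).toReal ≤
      C₁ * ((volume E).toReal / (b - a)) ^ C₂

/-- A strongly quasisymmetric increasing homeomorphism of `ℝ` is locally
absolutely continuous. -/
theorem sqs_locally_absolutely_continuous
    (h : ℝ → ℝ) (hmono : StrictMono h) (hcont : Continuous h)
    (hsurj : Function.Surjective h)
    (C₁ C₂ : ℝ) (hC₁ : 0 < C₁) (hC₂ : 0 < C₂) (hsqs : SQSWith C₁ C₂ h) :
    ∀ a b : ℝ, a < b → ∀ ε > 0, ∃ δ > 0, ∀ (n : ℕ) (s t : Fin n → ℝ),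
      (∀ i, a ≤ s i ∧ s i < t i ∧ t i ≤ b) →
      (∀ i j, i ≠ j → Disjoint (Set.Ioo (s i) (t i)) (Set.Ioo (s j) (t j))) →
      (∑ i, (t i - s i)) < δ → (∑ i, (h (t i) - h (s i))) < ε := by
  intro a b hab ε hε
  set e : ℝ ≃o ℝ := StrictMono.orderIsoOfSurjective h hmono hsurj with he
  have hecoe : (e : ℝ → ℝ) = h := StrictMono.coe_orderIsoOfSurjective h hmono hsurj
  have himIcc : ∀ x y : ℝ, h '' Icc x y = Icc (h x) (h y) := by
    intro x y
    rw [← hecoe]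
    exact e.image_Icc x y
  have himIoo : ∀ x y : ℝ, h '' Ioo x y = Ioo (h x) (h y) := by
    intro x y
    rw [← hecoe]
    exact e.image_Ioo x y
  have hK : (0:ℝ) < h b - h a := sub_pos.mpr (hmono hab)
  set K : ℝ := C₁ * (h b - h a) with hKdef
  have hKpos : 0 < K := mul_pos hC₁ hK
  set δ : ℝ := (b - a) * (ε / (2 * K)) ^ (1 / C₂) with hδdef
  have hba : (0:ℝ) < b - a := sub_pos.mpr hab
  have hεK : 0 < ε / (2 * K) := div_pos hε (by positivity)
  have hδpos : 0 < δ := mul_pos hba (Real.rpow_pos_of_pos hεK _)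
  refine ⟨δ, hδpos, ?_⟩
  intro n s t hst hdisj hsum
  set E : Set ℝ := ⋃ i, Icc (s i) (t i) with hE
  have hEmeas : MeasurableSet E := MeasurableSet.iUnion fun i => measurableSet_Icc
  have hEsub : E ⊆ Icc a b := by
    refine iUnion_subset fun i => Icc_subset_Icc (hst i).1 (hst i).2.2
  -- volume E ≤ ∑ (t i - s i)
  have hvolE : (volume E).toReal ≤ ∑ i, (t i - s i) := by
    have h1 : volume E ≤ ∑ i, volume (Icc (s i) (t i)) := measure_iUnion_fintype_le _ _
    have h2 : (∑ i, volume (Icc (s i) (t i))) = ENNReal.ofReal (∑ i, (t i - s i)) := by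
      rw [ENNReal.ofReal_sum_of_nonneg (fun i _ => sub_nonneg.mpr (hst i).2.1.le)]
      simp [Real.volume_Icc]
    rw [h2] at h1
    have := ENNReal.toReal_mono ENNReal.ofReal_ne_top h1
    refine this.trans ?_
    rw [ENNReal.toReal_ofReal (Finset.sum_nonneg fun i _ => sub_nonneg.mpr (hst i).2.1.le)]
  have hvolEδ : (volume E).toReal < δ := lt_of_le_of_lt hvolE hsum
  -- volume of image of Icc a b
  have hIm : (volume (h '' Icc a b)).toReal = h b - h a := by
    rw [himIcc, Real.volume_Icc, ENNReal.toReal_ofReal hK.le]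
  -- sum of h-increments equals volume of union of image intervals
  have hsumim : ∑ i, (h (t i) - h (s i)) = (volume (⋃ i, Ioo (h (s i)) (h (t i)))).toReal := by
    have hd : Pairwise (Function.onFun Disjoint fun i => Ioo (h (s i)) (h (t i))) := by
      intro i j hij
      have := hdisj i j hij
      simpa [Function.onFun, ← himIoo] using
        Set.disjoint_image_of_injective hmono.injective this
    have := measure_iUnion (μ := volume) hd (fun i => measurableSet_Ioo)
    rw [this, tsum_fintype, ENNReal.toReal_sum]
    · refine Finset.sum_congr rfl fun i _ => ?_
      rw [Real.volume_Ioo, ENNReal.toReal_ofReal (sub_nonneg.mpr (hmono (hst i).2.1).le)]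
    · intro i _
      simp [Real.volume_Ioo]
  -- union of image intervals sits inside h '' E
  have hsub2 : (⋃ i, Ioo (h (s i)) (h (t i))) ⊆ h '' E := by
    refine iUnion_subset fun i => ?_
    rw [← himIoo]
    exact image_mono ((Ioo_subset_Icc_self).trans
      (subset_iUnion (fun i => Icc (s i) (t i)) i))
  have hhEfin : volume (h '' E) ≠ ⊤ := by
    have : h '' E ⊆ Icc (h a) (h b) := by
      rw [← himIcc]; exact image_mono hEsub
    exact ne_top_of_le_ne_top (by simp [Real.volume_Icc]) (measure_mono this)
  have hle1 : ∑ i, (h (t i) - h (s i)) ≤ (volume (h '' E)).toReal := by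
    rw [hsumim]
    exact ENNReal.toReal_mono hhEfin (measure_mono hsub2)
  -- apply SQS
  have hsqs' := hsqs a b hab E hEsub hEmeas
  rw [hIm] at hsqs'
  have hle2 : (volume (h '' E)).toReal ≤ K * ((volume E).toReal / (b - a)) ^ C₂ := by
    have := (div_le_iff₀ hK).mp hsqs'
    calc (volume (h '' E)).toReal ≤ C₁ * ((volume E).toReal / (b - a)) ^ C₂ * (h b - h a) := this
      _ = K * ((volume E).toReal / (b - a)) ^ C₂ := by ring
  have hle3 : ((volume E).toReal / (b - a)) ^ C₂ ≤ (δ / (b - a)) ^ C₂ := by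
    refine Real.rpow_le_rpow (by positivity) ?_ hC₂.le
    gcongr
  have hδval : (δ / (b - a)) ^ C₂ = ε / (2 * K) := by
    rw [hδdef, mul_comm, mul_div_assoc, div_self hba.ne', mul_one]
    rw [← Real.rpow_mul hεK.le, one_div, inv_mul_cancel₀ hC₂.ne', Real.rpow_one]
  calc ∑ i, (h (t i) - h (s i)) ≤ (volume (h '' E)).toReal := hle1
    _ ≤ K * ((volume E).toReal / (b - a)) ^ C₂ := hle2
    _ ≤ K * ((δ / (b - a)) ^ C₂) := by
        exact mul_le_mul_of_nonneg_left hle3 hKpos.le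
    _ = K * (ε / (2 * K)) := by rw [hδval]
    _ = ε / 2 := by field_simp
    _ < ε := by linarith
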